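/- Let (‖·‖_ρ)_{ρ} be the family of norms on smooth functions h on {|ξ| < ρ₀} defined by ‖h‖_ρ = Σ_{k=0}^∞ ((Bρ)^k/k!)·sup_{|ξ|≤ρ}|h^{(k)}(ξ)|, where B ≥ 1. Then for 0 < ρ with ρ + ε < ρ₀ one has ‖h‖_ρ + Bε‖h'‖_ρ ≤ ‖h‖_{ρ+ε}. -/

import Mathlib

open scoped ENNReal

/-- The weighted norm ‖h‖_ρ = Σ_k ((Bρ)^k/k!)·sup_{|ξ|≤ρ} |h^{(k)}(ξ)|,
valued in ℝ≥0∞. -/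
noncomputable def normFam (B ρ : ℝ) (h : ℂ → ℂ) : ℝ≥0∞ :=
  ∑' k : ℕ, ENNReal.ofReal ((B * ρ) ^ k / (Nat.factorial k) *
    ⨆ ξ : {ξ : ℂ // ‖ξ‖ ≤ ρ}, ‖iteratedDeriv k h ξ‖)

/-- Auxiliary sup of |f| on the closed disc of radius `r`. -/
noncomputable def supAbs (f : ℂ → ℂ) (r : ℝ) : ℝ :=
  ⨆ ξ : {ξ : ℂ // ‖ξ‖ ≤ r}, ‖f ξ‖

lemma normFam_eq (B r : ℝ) (h : ℂ → ℂ) :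
    normFam B r h = ∑' k : ℕ, ENNReal.ofReal ((B * r) ^ k / (Nat.factorial k) *
      supAbs (iteratedDeriv k h) r) := rfl

lemma supAbs_nonneg (f : ℂ → ℂ) {r : ℝ} (hr : 0 ≤ r) : 0 ≤ supAbs f r := by
  by_cases hb : BddAbove (Set.range fun ξ : {ξ : ℂ // ‖ξ‖ ≤ r} =>
      ‖f ξ‖)
  · exact le_trans (norm_nonneg _) (le_ciSup hb ⟨0, by simpa using hr⟩)
  · rw [supAbs, Real.iSup_of_not_bddAbove hb]

lemma supAbs_mono (f : ℂ → ℂ) {r R : ℝ} (hr : 0 ≤ r) (hrR : r ≤ R)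
    (hbdd : BddAbove (Set.range fun ξ : {ξ : ℂ // ‖ξ‖ ≤ R} =>
      ‖f ξ‖)) : supAbs f r ≤ supAbs f R := by
  haveI : Nonempty {ξ : ℂ // ‖ξ‖ ≤ r} := ⟨⟨0, by simpa using hr⟩⟩
  exact ciSup_le fun ξ => le_ciSup hbdd ⟨(ξ : ℂ), le_trans ξ.2 hrR⟩

lemma supAbs_bddAbove {f : ℂ → ℂ} {R : ℝ}
    (hf : ContinuousOn f (Metric.closedBall (0 : ℂ) R)) :
    BddAbove (Set.range fun ξ : {ξ : ℂ // ‖ξ‖ ≤ R} =>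
      ‖f ξ‖) := by
  obtain ⟨C, hC⟩ := (isCompact_closedBall (0 : ℂ) R).exists_bound_of_continuousOn hf
  refine ⟨C, ?_⟩
  rintro x ⟨ξ, rfl⟩
  have hmem : (ξ : ℂ) ∈ Metric.closedBall (0 : ℂ) R := by
    simpa [Metric.mem_closedBall, Complex.dist_eq] using ξ.2
  simpa using hC ξ hmem

lemma analyticAt_iteratedDeriv {f : ℂ → ℂ} {s : Set ℂ}
    (hf : ∀ z ∈ s, AnalyticAt ℂ f z) (k : ℕ) :
    ∀ z ∈ s, AnalyticAt ℂ (iteratedDeriv k f) z := by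
  induction k generalizing f with
  | zero => simpa using hf
  | succ k ih =>
    intro z hz
    rw [iteratedDeriv_succ']
    refine ih (fun w hw => ?_) z hz
    have hfd : AnalyticAt ℂ (fderiv ℂ f) w := (hf w hw).fderiv
    have hcomp : AnalyticAt ℂ ((ContinuousLinearMap.apply ℂ ℂ (1 : ℂ)) ∘ (fderiv ℂ f)) w :=
      ((ContinuousLinearMap.apply ℂ ℂ (1 : ℂ)).analyticAt _).comp hfd
    have hde : deriv f = fun x => fderiv ℂ f x 1 := funext fun x => (fderiv_apply_one_eq_deriv).symm
    rw [hde]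
    exact hcomp

lemma pow_add_linear_le {x y : ℝ} (hx : 0 ≤ x) (hy : 0 ≤ y) :
    ∀ k : ℕ, x ^ (k + 1) + ((k : ℝ) + 1) * y * x ^ k ≤ (x + y) ^ (k + 1) := by
  intro k
  induction k with
  | zero => norm_num
  | succ k ih =>
    have h2 : (x + y) * (x ^ (k + 1) + ((k : ℝ) + 1) * y * x ^ k)
        ≤ (x + y) * (x + y) ^ (k + 1) :=
      mul_le_mul_of_nonneg_left ih (by linarith)
    have h3 : 0 ≤ y * y * x ^ k := by positivity
    have hk : (0 : ℝ) ≤ (k : ℝ) := Nat.cast_nonneg k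
    have e2 : (x + y) * (x ^ (k + 1) + ((k : ℝ) + 1) * y * x ^ k)
        = x ^ (k + 1 + 1) + ((k : ℝ) + 1 + 1) * y * x ^ (k + 1)
          + ((k : ℝ) + 1) * (y * y * x ^ k) := by ring
    have e3 : (x + y) * (x + y) ^ (k + 1) = (x + y) ^ (k + 1 + 1) := by ring
    have h5 : 0 ≤ ((k : ℝ) + 1) * (y * y * x ^ k) :=
      mul_nonneg (by linarith) h3
    push_cast
    rw [e2, e3] at h2
    linarith

theorem normFam_cauchy_estimate (B ρ ε ρ₀ : ℝ) (hB : 1 ≤ B)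
    (hρ : 0 < ρ) (hε : 0 < ε) (hρε : ρ + ε < ρ₀)
    (h : ℂ → ℂ) (hh : ∀ z ∈ Metric.ball (0 : ℂ) ρ₀, AnalyticAt ℂ h z) :
    normFam B ρ h + ENNReal.ofReal (B * ε) * normFam B ρ (deriv h) ≤
      normFam B (ρ + ε) h := by
  have hB0 : (0 : ℝ) < B := lt_of_lt_of_le one_pos hB
  have hρε0 : (0 : ℝ) ≤ ρ + ε := by linarith
  -- coefficients
  set a : ℕ → ℝ := fun k => (B * ρ) ^ k / (Nat.factorial k) with ha
  set b : ℕ → ℝ := fun k => Nat.rec 0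
    (fun j _ => B * ε * ((B * ρ) ^ j / (Nat.factorial j))) k with hb
  set c : ℕ → ℝ := fun k => (B * (ρ + ε)) ^ k / (Nat.factorial k) with hc
  have hb0 : b 0 = 0 := rfl
  have hbs : ∀ j, b (j + 1) = B * ε * ((B * ρ) ^ j / (Nat.factorial j)) := fun j => rfl
  have ha_nonneg : ∀ k, 0 ≤ a k := fun k => by
    have : (0:ℝ) ≤ B * ρ := by positivity
    positivity
  have hb_nonneg : ∀ k, 0 ≤ b k := by
    intro k
    cases k with
    | zero => simp [hb0]
    | succ j =>
      rw [hbs]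
      have : (0:ℝ) ≤ B * ρ := by positivity
      positivity
  -- the key coefficient inequality
  have hkey : ∀ k, a k + b k ≤ c k := by
    intro k
    cases k with
    | zero => simp [ha, hb0, hc]
    | succ j =>
      rw [hbs]
      have hx : (0:ℝ) ≤ B * ρ := by positivity
      have hy : (0:ℝ) ≤ B * ε := by positivity
      have hp := pow_add_linear_le hx hy j
      have hsum : (B * ρ) + (B * ε) = B * (ρ + ε) := by ring
      rw [hsum] at hp
      have hfac : ((j + 1).factorial : ℝ) = ((j : ℝ) + 1) * (j.factorial : ℝ) := by
        rw [Nat.factorial_succ]; push_cast; ring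
      have hjf : (0:ℝ) < (j.factorial : ℝ) := by exact_mod_cast j.factorial_pos
      show (B * ρ) ^ (j+1) / ((j+1).factorial : ℝ)
          + B * ε * ((B * ρ) ^ j / (j.factorial : ℝ))
          ≤ (B * (ρ + ε)) ^ (j+1) / ((j+1).factorial : ℝ)
      rw [hfac]
      have hexpand : (B * ρ) ^ (j+1) / (((j:ℝ) + 1) * (j.factorial : ℝ))
          + B * ε * ((B * ρ) ^ j / (j.factorial : ℝ))
          = ((B * ρ) ^ (j+1) + ((j:ℝ) + 1) * (B * ε) * (B * ρ) ^ j)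
              / (((j:ℝ) + 1) * (j.factorial : ℝ)) := by
        field_simp
      rw [hexpand]
      have hden : (0:ℝ) < ((j:ℝ) + 1) * (j.factorial : ℝ) := by positivity
      exact div_le_div_of_nonneg_right hp hden.le
  -- analyticity and continuity facts
  have hA : ∀ k, ∀ z ∈ Metric.ball (0 : ℂ) ρ₀, AnalyticAt ℂ (iteratedDeriv k h) z :=
    fun k => analyticAt_iteratedDeriv hh k
  have hsub : Metric.closedBall (0 : ℂ) (ρ + ε) ⊆ Metric.ball (0 : ℂ) ρ₀ := by
    intro x hx
    rw [Metric.mem_closedBall] at hx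
    rw [Metric.mem_ball]
    linarith
  have hcont : ∀ k, ContinuousOn (iteratedDeriv k h)
      (Metric.closedBall (0 : ℂ) (ρ + ε)) := fun k x hx =>
    ((hA k x (hsub hx)).continuousAt).continuousWithinAt
  have hbdd : ∀ k, BddAbove (Set.range fun ξ : {ξ : ℂ // ‖ξ‖ ≤ ρ + ε} =>
      ‖iteratedDeriv k h ξ‖) := fun k => supAbs_bddAbove (hcont k)
  set M : ℕ → ℝ → ℝ := fun k r => supAbs (iteratedDeriv k h) r with hM
  have hM_nonneg : ∀ k, ∀ r : ℝ, 0 ≤ r → 0 ≤ M k r := fun k r hr =>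
    supAbs_nonneg _ hr
  have hM_mono : ∀ k, M k ρ ≤ M k (ρ + ε) := fun k =>
    supAbs_mono _ hρ.le (by linarith) (hbdd k)
  -- reindexed second sum
  set g : ℕ → ℝ≥0∞ := fun k => ENNReal.ofReal (b k * M k ρ) with hg
  have hsecond : ENNReal.ofReal (B * ε) * normFam B ρ (deriv h) = ∑' k, g (k + 1) := by
    rw [normFam_eq, ← ENNReal.tsum_mul_left]
    congr 1
    ext k
    rw [hg]
    have hiter : iteratedDeriv k (deriv h) = iteratedDeriv (k + 1) h :=
      (iteratedDeriv_succ').symm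
    rw [← ENNReal.ofReal_mul (by positivity : (0:ℝ) ≤ B * ε)]
    congr 1
    · rw [hbs, hM]
      simp only [supAbs, hiter]
      ring
  calc normFam B ρ h + ENNReal.ofReal (B * ε) * normFam B ρ (deriv h)
      = (∑' k, ENNReal.ofReal (a k * M k ρ)) + ∑' k, g (k + 1) := by
        rw [hsecond, normFam_eq]
    _ ≤ (∑' k, ENNReal.ofReal (a k * M k ρ)) + ∑' k, g k := by
        exact add_le_add le_rfl (ENNReal.tsum_comp_le_tsum_of_injective Nat.succ_injective g)
    _ = ∑' k, (ENNReal.ofReal (a k * M k ρ) + g k) := (ENNReal.tsum_add).symm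
    _ ≤ ∑' k, ENNReal.ofReal (c k * M k (ρ + ε)) := by
        refine ENNReal.tsum_le_tsum fun k => ?_
        have h1 : ENNReal.ofReal (a k * M k ρ) + g k
            ≤ ENNReal.ofReal (a k * M k (ρ + ε)) + ENNReal.ofReal (b k * M k (ρ + ε)) :=
          add_le_add
            (ENNReal.ofReal_le_ofReal
              (mul_le_mul_of_nonneg_left (hM_mono k) (ha_nonneg k)))
            (ENNReal.ofReal_le_ofReal
              (mul_le_mul_of_nonneg_left (hM_mono k) (hb_nonneg k)))
        refine h1.trans ?_
        rw [← ENNReal.ofReal_add (mul_nonneg (ha_nonneg k) (hM_nonneg k _ hρε0))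
          (mul_nonneg (hb_nonneg k) (hM_nonneg k _ hρε0))]
        refine ENNReal.ofReal_le_ofReal ?_
        have hMk := hM_nonneg k (ρ + ε) hρε0
        nlinarith [hkey k, hMk, mul_le_mul_of_nonneg_right (hkey k) hMk]
    _ = normFam B (ρ + ε) h := (normFam_eq _ _ _).symm
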